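/- For each positive integer n there exists ρ_n with 0 < ρ_n < 1 such that the arithmetic mean A(X,Y) = (X+Y)/2 is coordinatewise ρ_n-contractive with respect to the Thompson metric on the order interval [(1/n)I, nI] of positive definite operators: for all A, B, C in [(1/n)I, nI], d((A+B)/2, (A+C)/2) ≤ ρ_n d(B,C). -/

import Mathlib

set_option maxHeartbeats 1000000
set_option synthInstance.maxHeartbeats 400000
set_option linter.unusedSectionVars false
set_option linter.unusedVariables false

open ContinuousLinearMap

variable {E : Type*} [NormedAddCommGroup E] [InnerProductSpace ℂ E] [CompleteSpace E]

/-- Positive definite: positive and invertible. -/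
def IsPosDef (A : E →L[ℂ] E) : Prop := A.IsPositive ∧ IsUnit A

/-- `M(A/B) = inf {t > 0 : A ≤ t B}` (in the Loewner order). -/
noncomputable def Mratio (A B : E →L[ℂ] E) : ℝ :=
  sInf {t : ℝ | 0 < t ∧ (t • B - A).IsPositive}

/-- The Thompson (part) metric. -/
noncomputable def thompsonDist (A B : E →L[ℂ] E) : ℝ :=
  max (Real.log (Mratio A B)) (Real.log (Mratio B A))

/-- Membership in the order interval `[(1/n)I, nI]`. -/
def InOrderInterval (n : ℕ) (X : E →L[ℂ] E) : Prop :=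
  (X - ((n : ℝ)⁻¹ : ℝ) • (1 : E →L[ℂ] E)).IsPositive ∧
    ((n : ℝ) • (1 : E →L[ℂ] E) - X).IsPositive

namespace MeanContraction

lemma reApply_sub (T U : E →L[ℂ] E) (x : E) :
    (T - U).reApplyInnerSelf x = T.reApplyInnerSelf x - U.reApplyInnerSelf x := by
  simp [reApplyInnerSelf, sub_apply, inner_sub_left]

lemma reApply_smul (t : ℝ) (T : E →L[ℂ] E) (x : E) :
    (t • T).reApplyInnerSelf x = t * T.reApplyInnerSelf x := by
  simp only [reApplyInnerSelf, coe_smul', Pi.smul_apply,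
    ← algebraMap_smul ℂ t (T x), Complex.coe_algebraMap, inner_smul_left]
  simp

lemma reApply_one (x : E) : (1 : E →L[ℂ] E).reApplyInnerSelf x = ‖x‖ ^ 2 := by
  simp [reApplyInnerSelf, inner_self_eq_norm_sq]
  norm_cast

lemma isSelfAdjoint_real_smul {c : ℝ} {T : E →L[ℂ] E} (hT : IsSelfAdjoint T) :
    IsSelfAdjoint (c • T) := by
  rw [show c • T = ((c : ℂ)) • T from (algebraMap_smul ℂ c T).symm]
  show star _ = _
  rw [star_smul, hT.star_eq]
  simp

lemma isPositive_real_smul {c : ℝ} (hc : 0 ≤ c) {T : E →L[ℂ] E} (hT : T.IsPositive) :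
    (c • T).IsPositive := by
  refine ⟨(isSelfAdjoint_real_smul hT.isSelfAdjoint).isSymmetric, fun x => ?_⟩
  rw [reApply_smul]
  exact mul_nonneg hc (hT.2 x)

lemma nonneg_of_smul_one [Nontrivial E] {c : ℝ}
    (h : ((c • (1 : E →L[ℂ] E))).IsPositive) : 0 ≤ c := by
  obtain ⟨x, hx⟩ := exists_ne (0 : E)
  have h2 := h.2 x
  rw [reApply_smul, reApply_one] at h2
  have hxn : (0 : ℝ) < ‖x‖ := norm_pos_iff.mpr hx
  have hx2 : (0 : ℝ) < ‖x‖ ^ 2 := by positivity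
  nlinarith

lemma interval_isPositive {n : ℕ} {X : E →L[ℂ] E} (hX : InOrderInterval n X) :
    X.IsPositive := by
  have h := hX.1.add (isPositive_real_smul (c := ((n : ℝ)⁻¹ : ℝ))
    (by positivity) isPositive_one)
  simpa using h

lemma interval_mean {n : ℕ} {A B : E →L[ℂ] E} (hA : InOrderInterval n A)
    (hB : InOrderInterval n B) : InOrderInterval n ((2 : ℝ)⁻¹ • (A + B)) := by
  constructor
  · have h := isPositive_real_smul (c := (2 : ℝ)⁻¹) (by norm_num) (hA.1.add hB.1)
    convert h using 1
    module
  · have h := isPositive_real_smul (c := (2 : ℝ)⁻¹) (by norm_num) (hA.2.add hB.2)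
    convert h using 1
    module

lemma sq_mem {n : ℕ} (hn : 0 < n) {A B : E →L[ℂ] E} (hA : InOrderInterval n A)
    (hB : InOrderInterval n B) :
    ((n : ℝ) ^ 2) ∈ {t : ℝ | 0 < t ∧ (t • B - A).IsPositive} := by
  have hn' : (0 : ℝ) < (n : ℝ) := by exact_mod_cast hn
  refine ⟨by positivity, ?_⟩
  have key : ((n : ℝ) ^ 2) • B - A
      = ((n : ℝ) ^ 2) • (B - ((n : ℝ)⁻¹ : ℝ) • (1 : E →L[ℂ] E))
        + ((n : ℝ) • (1 : E →L[ℂ] E) - A) := by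
    have h1 : (n : ℝ) ^ 2 * (n : ℝ)⁻¹ = (n : ℝ) := by field_simp
    rw [smul_sub, smul_smul, h1]
    abel
  rw [key]
  exact (isPositive_real_smul (by positivity) hB.1).add hA.2

lemma mem_lb [Nontrivial E] {n : ℕ} (hn : 0 < n) {A B : E →L[ℂ] E}
    (hA : InOrderInterval n A) (hB : InOrderInterval n B) {t : ℝ}
    (ht : t ∈ {t : ℝ | 0 < t ∧ (t • B - A).IsPositive}) : ((n : ℝ) ^ 2)⁻¹ ≤ t := by
  have hn' : (0 : ℝ) < (n : ℝ) := by exact_mod_cast hn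
  have hpos : (((t * (n : ℝ) - (n : ℝ)⁻¹) : ℝ) • (1 : E →L[ℂ] E)).IsPositive := by
    have h := (ht.2.add (isPositive_real_smul ht.1.le hB.2)).add hA.1
    convert h using 1
    module
  have h0 := nonneg_of_smul_one hpos
  have hinv : (n : ℝ)⁻¹ * (n : ℝ) = 1 := inv_mul_cancel₀ hn'.ne'
  rw [inv_eq_one_div, div_le_iff₀ (by positivity)]
  nlinarith

lemma Mratio_lb [Nontrivial E] {n : ℕ} (hn : 0 < n) {A B : E →L[ℂ] E}
    (hA : InOrderInterval n A) (hB : InOrderInterval n B) :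
    ((n : ℝ) ^ 2)⁻¹ ≤ Mratio A B :=
  le_csInf ⟨_, sq_mem hn hA hB⟩ fun _ ht => mem_lb hn hA hB ht

lemma Mratio_pos [Nontrivial E] {n : ℕ} (hn : 0 < n) {A B : E →L[ℂ] E}
    (hA : InOrderInterval n A) (hB : InOrderInterval n B) : 0 < Mratio A B := by
  have hn' : (0 : ℝ) < (n : ℝ) := by exact_mod_cast hn
  exact lt_of_lt_of_le (by positivity) (Mratio_lb hn hA hB)

lemma bddBelow_S (A B : E →L[ℂ] E) :
    BddBelow {t : ℝ | 0 < t ∧ (t • B - A).IsPositive} :=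
  ⟨0, fun _ ht => ht.1.le⟩

lemma Mratio_ub {n : ℕ} (hn : 0 < n) {A B : E →L[ℂ] E} (hA : InOrderInterval n A)
    (hB : InOrderInterval n B) : Mratio A B ≤ (n : ℝ) ^ 2 :=
  csInf_le (bddBelow_S A B) (sq_mem hn hA hB)

lemma Mratio_spec [Nontrivial E] {n : ℕ} (hn : 0 < n) {A B : E →L[ℂ] E}
    (hA : InOrderInterval n A) (hB : InOrderInterval n B) :
    ((Mratio A B) • B - A).IsPositive := by
  have hSne : Set.Nonempty {t : ℝ | 0 < t ∧ (t • B - A).IsPositive} :=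
    ⟨_, sq_mem hn hA hB⟩
  constructor
  · exact ((isSelfAdjoint_real_smul (interval_isPositive hB).isSelfAdjoint).sub
      (interval_isPositive hA).isSelfAdjoint).isSymmetric
  · intro x
    have key : ∀ t ∈ {t : ℝ | 0 < t ∧ (t • B - A).IsPositive},
        A.reApplyInnerSelf x ≤ t * B.reApplyInnerSelf x := by
      intro t ht
      have h := ht.2.2 x
      rw [reApply_sub, reApply_smul] at h
      linarith
    rw [reApply_sub, reApply_smul]
    have hrB : 0 ≤ B.reApplyInnerSelf x := (interval_isPositive hB).2 x
    rcases eq_or_lt_of_le hrB with h0 | h0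
    · have h1 := key _ (sq_mem hn hA hB)
      have hs0 : 0 ≤ Mratio A B := (Mratio_pos hn hA hB).le
      nlinarith
    · have h2 : A.reApplyInnerSelf x / B.reApplyInnerSelf x ≤ Mratio A B :=
        le_csInf hSne fun t ht => by
          rw [div_le_iff₀ h0]; exact key t ht
      rw [div_le_iff₀ h0] at h2
      linarith

lemma one_le_max_Mratio [Nontrivial E] {n : ℕ} (hn : 0 < n) {B C : E →L[ℂ] E}
    (hB : InOrderInterval n B) (hC : InOrderInterval n C) :
    1 ≤ max (Mratio B C) (Mratio C B) := by
  have hn' : (0 : ℝ) < (n : ℝ) := by exact_mod_cast hn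
  have h1 : ((Mratio B C) • C - B).IsPositive := Mratio_spec hn hB hC
  have h2 : ((Mratio C B) • B - C).IsPositive := Mratio_spec hn hC hB
  have hs : 0 < Mratio B C := Mratio_pos hn hB hC
  have hs' : 0 < Mratio C B := Mratio_pos hn hC hB
  have key : ((Mratio B C * Mratio C B - 1) • B).IsPositive := by
    have h := (isPositive_real_smul hs.le h2).add h1
    convert h using 1
    module
  obtain ⟨x, hx⟩ := exists_ne (0 : E)
  have hxn : (0 : ℝ) < ‖x‖ := norm_pos_iff.mpr hx
  have hx2 : (0 : ℝ) < ‖x‖ ^ 2 := by positivity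
  have hninv : (0 : ℝ) < (n : ℝ)⁻¹ := by positivity
  have hBx : 0 < B.reApplyInnerSelf x := by
    have h := hB.1.2 x
    rw [reApply_sub, reApply_smul, reApply_one] at h
    nlinarith
  have h3 := key.2 x
  rw [reApply_smul] at h3
  have hss' : 1 ≤ Mratio B C * Mratio C B := by nlinarith
  have h4 : Mratio B C ≤ max (Mratio B C) (Mratio C B) := le_max_left _ _
  have h5 : Mratio C B ≤ max (Mratio B C) (Mratio C B) := le_max_right _ _
  nlinarith

lemma mean_le {n : ℕ} (hn : 0 < n) {A B C : E →L[ℂ] E} (hA : InOrderInterval n A)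
    (hB : InOrderInterval n B) (hC : InOrderInterval n C) {m : ℝ} (hm : 1 ≤ m)
    (hmBC : (m • B - C).IsPositive) :
    ((((n : ℝ) ^ 2 * m + 1) / ((n : ℝ) ^ 2 + 1)) • ((2 : ℝ)⁻¹ • (A + B))
      - (2 : ℝ)⁻¹ • (A + C)).IsPositive := by
  have hn' : (0 : ℝ) < (n : ℝ) := by exact_mod_cast hn
  set K := (n : ℝ) ^ 2 with hK_def
  have hK : 0 < K := by positivity
  set Λ := (K * m + 1) / (K + 1) with hΛ_def
  have hΛeq : Λ * (K + 1) = K * m + 1 := div_mul_cancel₀ _ (by positivity)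
  have hΛ1 : 1 ≤ Λ := by rw [le_div_iff₀ (by positivity)]; nlinarith
  have hmΛ : Λ ≤ m := by rw [div_le_iff₀ (by positivity)]; nlinarith
  have key : Λ • ((2 : ℝ)⁻¹ • (A + B)) - (2 : ℝ)⁻¹ • (A + C)
      = (2 : ℝ)⁻¹ • ((m • B - C) + (Λ - 1) • (A - ((n : ℝ)⁻¹ : ℝ) • (1 : E →L[ℂ] E))
        + (m - Λ) • ((n : ℝ) • (1 : E →L[ℂ] E) - B)) := by
    match_scalars <;> (try ring) <;> (try field_simp) <;> (try nlinarith [hΛeq])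
  rw [key]
  refine isPositive_real_smul (by norm_num) ?_
  exact (hmBC.add (isPositive_real_smul (by linarith) hA.1)).add
    (isPositive_real_smul (by linarith) hB.2)

lemma holder_aux {K a : ℝ} (hK1 : 1 < K) (ha0 : 0 ≤ a) (ha1 : a ≤ 1) :
    K * K ^ a + 1 ≤ (K + 1) ^ (1 - a) * (K ^ 2 + 1) ^ a := by
  have hK0 : (0 : ℝ) < K := by linarith
  have hX : (0 : ℝ) < K + 1 := by linarith
  have hY : (0 : ℝ) < K ^ 2 + 1 := by positivity
  have hXp : 0 < (K + 1) ^ (1 - a) := Real.rpow_pos_of_pos hX _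
  have hYp : 0 < (K ^ 2 + 1) ^ a := Real.rpow_pos_of_pos hY _
  have h1 := Real.geom_mean_le_arith_mean2_weighted (w₁ := 1 - a) (w₂ := a)
    (p₁ := K / (K + 1)) (p₂ := K ^ 2 / (K ^ 2 + 1)) (by linarith) ha0
    (by positivity) (by positivity) (by ring)
  have h2 := Real.geom_mean_le_arith_mean2_weighted (w₁ := 1 - a) (w₂ := a)
    (p₁ := 1 / (K + 1)) (p₂ := 1 / (K ^ 2 + 1)) (by linarith) ha0
    (by positivity) (by positivity) (by ring)
  have e1 : (K / (K + 1)) ^ (1 - a) * (K ^ 2 / (K ^ 2 + 1)) ^ a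
      * ((K + 1) ^ (1 - a) * (K ^ 2 + 1) ^ a) = K ^ (1 - a) * ((K ^ 2 : ℝ)) ^ a := by
    rw [Real.div_rpow hK0.le hX.le, Real.div_rpow (by positivity) hY.le]
    field_simp
  have e2 : (1 / (K + 1)) ^ (1 - a) * (1 / (K ^ 2 + 1)) ^ a
      * ((K + 1) ^ (1 - a) * (K ^ 2 + 1) ^ a) = 1 := by
    rw [Real.div_rpow zero_le_one hX.le, Real.div_rpow zero_le_one hY.le,
      Real.one_rpow, Real.one_rpow]
    field_simp
  have eKm : K ^ (1 - a) * ((K ^ 2 : ℝ)) ^ a = K * K ^ a := by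
    have h2a : ((K ^ 2 : ℝ)) ^ a = K ^ (2 * a) := by
      rw [← Real.rpow_natCast K 2, ← Real.rpow_mul hK0.le]
      norm_num
    rw [h2a, ← Real.rpow_add hK0,
      show (1 - a + 2 * a) = 1 + a by ring, Real.rpow_add hK0, Real.rpow_one]
  have hh1 : K * K ^ a ≤ ((1 - a) * (K / (K + 1)) + a * (K ^ 2 / (K ^ 2 + 1)))
      * ((K + 1) ^ (1 - a) * (K ^ 2 + 1) ^ a) := by
    rw [← eKm, ← e1]
    exact mul_le_mul_of_nonneg_right h1 (by positivity)
  have hh2 : (1 : ℝ) ≤ ((1 - a) * (1 / (K + 1)) + a * (1 / (K ^ 2 + 1)))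
      * ((K + 1) ^ (1 - a) * (K ^ 2 + 1) ^ a) := by
    calc (1 : ℝ) = (1 / (K + 1)) ^ (1 - a) * (1 / (K ^ 2 + 1)) ^ a
        * ((K + 1) ^ (1 - a) * (K ^ 2 + 1) ^ a) := e2.symm
      _ ≤ _ := mul_le_mul_of_nonneg_right h2 (by positivity)
  have hsum : (((1 - a) * (K / (K + 1)) + a * (K ^ 2 / (K ^ 2 + 1)))
        + ((1 - a) * (1 / (K + 1)) + a * (1 / (K ^ 2 + 1)))) = 1 := by
    field_simp
    ring
  have hfin : ((1 - a) * (K / (K + 1)) + a * (K ^ 2 / (K ^ 2 + 1)))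
        * ((K + 1) ^ (1 - a) * (K ^ 2 + 1) ^ a)
      + ((1 - a) * (1 / (K + 1)) + a * (1 / (K ^ 2 + 1)))
        * ((K + 1) ^ (1 - a) * (K ^ 2 + 1) ^ a)
      = (K + 1) ^ (1 - a) * (K ^ 2 + 1) ^ a := by
    rw [← add_mul, hsum, one_mul]
  linarith

lemma scalar_key {K m : ℝ} (hK : 2 ≤ K) (hm1 : 1 ≤ m) (hmK : m ≤ K) :
    Real.log ((K * m + 1) / (K + 1))
      ≤ (Real.log ((K ^ 2 + 1) / (K + 1)) / Real.log K) * Real.log m := by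
  have hK0 : (0 : ℝ) < K := by linarith
  have hK1 : (1 : ℝ) < K := by linarith
  have hlogK : 0 < Real.log K := Real.log_pos hK1
  have hm0 : (0 : ℝ) < m := by linarith
  have hX : (0 : ℝ) < K + 1 := by linarith
  have hY : (0 : ℝ) < K ^ 2 + 1 := by positivity
  have ha0 : 0 ≤ Real.log m / Real.log K := div_nonneg (Real.log_nonneg hm1) hlogK.le
  have ha1 : Real.log m / Real.log K ≤ 1 := by
    rw [div_le_one hlogK]
    exact Real.log_le_log hm0 hmK
  have halog : (Real.log m / Real.log K) * Real.log K = Real.log m :=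
    div_mul_cancel₀ _ hlogK.ne'
  have hKa : K ^ (Real.log m / Real.log K) = m := by
    rw [Real.rpow_def_of_pos hK0, mul_comm, halog, Real.exp_log hm0]
  have hmain : K * m + 1
      ≤ (K + 1) ^ (1 - Real.log m / Real.log K) * (K ^ 2 + 1) ^ (Real.log m / Real.log K) := by
    have h := holder_aux hK1 ha0 ha1
    rwa [hKa] at h
  have hXp : 0 < (K + 1) ^ (1 - Real.log m / Real.log K) := Real.rpow_pos_of_pos hX _
  have hYp : 0 < (K ^ 2 + 1) ^ (Real.log m / Real.log K) := Real.rpow_pos_of_pos hY _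
  have hlog1 : Real.log (K * m + 1)
      ≤ (1 - Real.log m / Real.log K) * Real.log (K + 1)
        + (Real.log m / Real.log K) * Real.log (K ^ 2 + 1) := by
    calc Real.log (K * m + 1)
        ≤ Real.log ((K + 1) ^ (1 - Real.log m / Real.log K)
            * (K ^ 2 + 1) ^ (Real.log m / Real.log K)) :=
          Real.log_le_log (by positivity) hmain
      _ = (1 - Real.log m / Real.log K) * Real.log (K + 1)
          + (Real.log m / Real.log K) * Real.log (K ^ 2 + 1) := by
          rw [Real.log_mul hXp.ne' hYp.ne', Real.log_rpow hX, Real.log_rpow hY]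
  rw [Real.log_div (by positivity) hX.ne', Real.log_div hY.ne' hX.ne']
  have hrhs : (Real.log (K ^ 2 + 1) - Real.log (K + 1)) / Real.log K * Real.log m
      = (Real.log m / Real.log K) * (Real.log (K ^ 2 + 1) - Real.log (K + 1)) := by
    field_simp
  rw [hrhs]
  nlinarith [hlog1]

end MeanContraction

open MeanContraction in
theorem arithmetic_mean_contractive_on_order_interval :
    ∀ n : ℕ, 0 < n → ∃ ρ : ℝ, 0 < ρ ∧ ρ < 1 ∧
      ∀ A B C : E →L[ℂ] E,
        InOrderInterval n A → InOrderInterval n B → InOrderInterval n C →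
        thompsonDist ((2 : ℝ)⁻¹ • (A + B)) ((2 : ℝ)⁻¹ • (A + C)) ≤ ρ * thompsonDist B C := by
  intro n hn
  rcases subsingleton_or_nontrivial E with hE | hE
  · refine ⟨1/2, by norm_num, by norm_num, fun A B C _ _ _ => ?_⟩
    have hM : ∀ X Y : E →L[ℂ] E, Mratio X Y = 0 := by
      intro X Y
      have hset : {t : ℝ | 0 < t ∧ ((t • Y - X)).IsPositive} = Set.Ioi 0 := by
        ext t
        simp only [Set.mem_setOf_eq, Set.mem_Ioi, and_iff_left_iff_imp]
        intro _
        exact ⟨fun a b => by simp [Subsingleton.elim a 0], fun x => by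
          rw [Subsingleton.elim x 0]
          simp [reApplyInnerSelf]⟩
      rw [Mratio, hset, csInf_Ioi]
    simp [thompsonDist, hM]
  · have hn' : (0 : ℝ) < (n : ℝ) := by exact_mod_cast hn
    by_cases hn1 : n = 1
    · refine ⟨1/2, by norm_num, by norm_num, fun A B C hA hB hC => ?_⟩
      subst hn1
      have hMB := interval_mean hA hB
      have hMC := interval_mean hA hC
      have hub : Mratio ((2 : ℝ)⁻¹ • (A + B)) ((2 : ℝ)⁻¹ • (A + C)) ≤ 1 := by
        have h := Mratio_ub hn hMB hMC
        simpa only [Nat.cast_one, one_pow] using h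
      have hub' : Mratio ((2 : ℝ)⁻¹ • (A + C)) ((2 : ℝ)⁻¹ • (A + B)) ≤ 1 := by
        have h := Mratio_ub hn hMC hMB
        simpa only [Nat.cast_one, one_pow] using h
      have hpos : 0 < Mratio ((2 : ℝ)⁻¹ • (A + B)) ((2 : ℝ)⁻¹ • (A + C)) :=
        Mratio_pos hn hMB hMC
      have hpos' : 0 < Mratio ((2 : ℝ)⁻¹ • (A + C)) ((2 : ℝ)⁻¹ • (A + B)) :=
        Mratio_pos hn hMC hMB
      have hBC : 0 ≤ thompsonDist B C := by
        have h1 : 1 ≤ max (Mratio B C) (Mratio C B) := one_le_max_Mratio hn hB hC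
        rcases le_total (Mratio B C) (Mratio C B) with h | h
        · have h' : 1 ≤ Mratio C B := by rwa [max_eq_right h] at h1
          exact le_trans (Real.log_nonneg h') (le_max_right _ _)
        · have h' : 1 ≤ Mratio B C := by rwa [max_eq_left h] at h1
          exact le_trans (Real.log_nonneg h') (le_max_left _ _)
      have hL : thompsonDist ((2 : ℝ)⁻¹ • (A + B)) ((2 : ℝ)⁻¹ • (A + C)) ≤ 0 :=
        max_le (Real.log_nonpos hpos.le hub) (Real.log_nonpos hpos'.le hub')
      linarith
    · have hn2 : 2 ≤ n := by omega
      have hK2 : 2 ≤ (n : ℝ) ^ 2 := by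
        have h : (2 : ℝ) ≤ (n : ℝ) := by exact_mod_cast hn2
        nlinarith
      refine ⟨Real.log ((((n : ℝ) ^ 2) ^ 2 + 1) / ((n : ℝ) ^ 2 + 1)) / Real.log ((n : ℝ) ^ 2),
        ?_, ?_, ?_⟩
      · apply div_pos
        · apply Real.log_pos
          rw [lt_div_iff₀ (by positivity)]
          nlinarith
        · exact Real.log_pos (by nlinarith)
      · rw [div_lt_one (Real.log_pos (by nlinarith))]
        apply Real.log_lt_log (by positivity)
        rw [div_lt_iff₀ (by positivity)]
        nlinarith
      · intro A B C hA hB hC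
        set s := Mratio B C with hs_def
        set s' := Mratio C B with hs'_def
        set m := max s s' with hm_def
        have hm1 : 1 ≤ m := one_le_max_Mratio hn hB hC
        have hmK : m ≤ (n : ℝ) ^ 2 := max_le (Mratio_ub hn hB hC) (Mratio_ub hn hC hB)
        have hs : 0 < s := Mratio_pos hn hB hC
        have hs' : 0 < s' := Mratio_pos hn hC hB
        have hmCB : (m • C - B).IsPositive := by
          have h1 : (s • C - B).IsPositive := Mratio_spec hn hB hC
          have h2 : ((m - s) • C).IsPositive :=
            isPositive_real_smul (by simp [hm_def]) (interval_isPositive hC)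
          have h := h1.add h2
          convert h using 1
          module
        have hmBC : (m • B - C).IsPositive := by
          have h1 : (s' • B - C).IsPositive := Mratio_spec hn hC hB
          have h2 : ((m - s') • B).IsPositive :=
            isPositive_real_smul (by simp [hm_def]) (interval_isPositive hB)
          have h := h1.add h2
          convert h using 1
          module
        have hΛpos : 0 < ((n : ℝ) ^ 2 * m + 1) / ((n : ℝ) ^ 2 + 1) := by positivity
        have hMB := interval_mean hA hB
        have hMC := interval_mean hA hC
        have hub1 : Mratio ((2 : ℝ)⁻¹ • (A + C)) ((2 : ℝ)⁻¹ • (A + B))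
            ≤ ((n : ℝ) ^ 2 * m + 1) / ((n : ℝ) ^ 2 + 1) :=
          csInf_le (bddBelow_S _ _) ⟨hΛpos, mean_le hn hA hB hC hm1 hmBC⟩
        have hub2 : Mratio ((2 : ℝ)⁻¹ • (A + B)) ((2 : ℝ)⁻¹ • (A + C))
            ≤ ((n : ℝ) ^ 2 * m + 1) / ((n : ℝ) ^ 2 + 1) :=
          csInf_le (bddBelow_S _ _) ⟨hΛpos, mean_le hn hA hC hB hm1 hmCB⟩
        have hdmean : thompsonDist ((2 : ℝ)⁻¹ • (A + B)) ((2 : ℝ)⁻¹ • (A + C))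
            ≤ Real.log (((n : ℝ) ^ 2 * m + 1) / ((n : ℝ) ^ 2 + 1)) :=
          max_le (Real.log_le_log (Mratio_pos hn hMB hMC) hub2)
            (Real.log_le_log (Mratio_pos hn hMC hMB) hub1)
        have hdBC : thompsonDist B C = Real.log m := by
          rw [thompsonDist, ← hs_def, ← hs'_def]
          rcases le_total s s' with h | h
          · rw [hm_def, max_eq_right h, max_eq_right (Real.log_le_log hs h)]
          · rw [hm_def, max_eq_left h, max_eq_left (Real.log_le_log hs' h)]
        rw [hdBC]
        exact le_trans hdmean (scalar_key hK2 hm1 hmK)
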